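/- There exists an explicit finite constant, namely L⁰ := max( max(B₁', L_bloc·(ζ^{β−1} + 1)) + L_G·(β·ζ^{β−1} + 1), (L_bloc + L_G)·(max(ζ^{β−1}, 1) + 1) + L_G·ζ^{β−1} ), such that for all distinct x, y > 0: (y/(x − y))·( (b(x) − b(0))/x − (b(y) − b(0))/y ) ≤ L⁰ − L_G·min(β − 1, 1)·y·max(x, y)^{β−2}. -/

import Mathlib

lemma rpow_split (x p : ℝ) (hx : 0 < x) : x ^ p = x * x ^ (p - 1) := by
  nth_rewrite 1 [show p = 1 + (p - 1) by ring]
  rw [Real.rpow_add hx, Real.rpow_one]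

lemma aux_star {β L_G B₁' ζ : ℝ} (hβ : 1 < β) (hLG : 0 ≤ L_G) (hζ : 0 < ζ)
    (b : ℝ → ℝ)
    (hderiv : ∀ x : ℝ, ζ ≤ x →
      DifferentiableAt ℝ b x ∧ deriv b x ≤ B₁' - β * L_G * x ^ (β - 1))
    {u v : ℝ} (hu : ζ ≤ u) (huv : u ≤ v) :
    b v - b u ≤ B₁' * (v - u) - L_G * (v ^ β - u ^ β) := by
  set f : ℝ → ℝ := fun t => b t - B₁' * t + L_G * t ^ β with hf
  have hdf : ∀ t : ℝ, ζ ≤ t →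
      HasDerivAt f (deriv b t - B₁' + L_G * (β * t ^ (β - 1))) t := by
    intro t ht
    have ht0 : t ≠ 0 := ne_of_gt (lt_of_lt_of_le hζ ht)
    have h1 : HasDerivAt b (deriv b t) t := (hderiv t ht).1.hasDerivAt
    have h2 : HasDerivAt (fun s : ℝ => s ^ β) (β * t ^ (β - 1)) t :=
      Real.hasDerivAt_rpow_const (Or.inl ht0)
    have := (h1.sub ((hasDerivAt_id t).const_mul B₁')).add (h2.const_mul L_G)
    exact this.congr_deriv (by ring)
  have hanti : AntitoneOn f (Set.Ici ζ) := by
    apply antitoneOn_of_deriv_nonpos (convex_Ici ζ)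
    · intro t ht
      exact (hdf t ht).continuousAt.continuousWithinAt
    · intro t ht
      rw [interior_Ici] at ht
      exact (hdf t (le_of_lt ht)).differentiableAt.differentiableWithinAt
    · intro t ht
      rw [interior_Ici] at ht
      rw [(hdf t ht.le).deriv]
      have h3 := (hderiv t ht.le).2
      have h4 : L_G * (β * t ^ (β - 1)) = β * L_G * t ^ (β - 1) := by ring
      linarith
  have h := hanti (Set.mem_Ici.mpr hu) (Set.mem_Ici.mpr (le_trans hu huv)) huv
  simp only [hf] at h
  linarith

lemma aux_C1 {β : ℝ} (hβ : 1 < β) {u v : ℝ} (hu : 0 < u) (huv : u ≤ v) :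
    (v - u) * (min (β - 1) 1 * v ^ (β - 1) + u ^ (β - 1)) ≤ v ^ β - u ^ β := by
  rcases eq_or_lt_of_le huv with rfl | hlt
  · simp
  have hv : 0 < v := hu.trans hlt
  have hvs : v ^ β = v * v ^ (β - 1) := rpow_split v β hv
  have hus : u ^ β = u * u ^ (β - 1) := rpow_split u β hu
  have hv2 : v ^ (β - 1) = v * v ^ (β - 2) := by
    have := rpow_split v (β - 1) hv
    rwa [show β - 1 - 1 = β - 2 by ring] at this
  have hu2 : u ^ (β - 1) = u * u ^ (β - 2) := by
    have := rpow_split u (β - 1) hu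
    rwa [show β - 1 - 1 = β - 2 by ring] at this
  rcases le_total β 2 with h2 | h2
  · rw [min_eq_left (by linarith)]
    have key : (β - 1) * v ^ (β - 2) * (v - u) ≤ v ^ (β - 1) - u ^ (β - 1) := by
      set g : ℝ → ℝ := fun t => t ^ (β - 1) - (β - 1) * v ^ (β - 2) * t with hg
      have hdg : ∀ t : ℝ, 0 < t →
          HasDerivAt g ((β - 1) * t ^ (β - 2) - (β - 1) * v ^ (β - 2)) t := by
        intro t ht
        have h1 : HasDerivAt (fun s : ℝ => s ^ (β - 1)) ((β - 1) * t ^ (β - 1 - 1)) t :=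
          Real.hasDerivAt_rpow_const (Or.inl (ne_of_gt ht))
        rw [show β - 1 - 1 = β - 2 by ring] at h1
        have := h1.sub ((hasDerivAt_id t).const_mul ((β - 1) * v ^ (β - 2)))
        exact this.congr_deriv (by ring)
      have hmono : MonotoneOn g (Set.Icc u v) := by
        apply monotoneOn_of_deriv_nonneg (convex_Icc u v)
        · intro t ht
          exact (hdg t (lt_of_lt_of_le hu ht.1)).continuousAt.continuousWithinAt
        · intro t ht
          rw [interior_Icc] at ht
          exact (hdg t (hu.trans ht.1)).differentiableAt.differentiableWithinAt
        · intro t ht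
          rw [interior_Icc] at ht
          rw [(hdg t (hu.trans ht.1)).deriv]
          have hta : v ^ (β - 2) ≤ t ^ (β - 2) :=
            Real.rpow_le_rpow_of_nonpos (hu.trans ht.1) ht.2.le (by linarith)
          nlinarith
      have hm := hmono (Set.left_mem_Icc.mpr huv) (Set.right_mem_Icc.mpr huv) huv
      simp only [hg] at hm
      linarith
    have key2 : (β - 1) * v ^ (β - 1) * (v - u) ≤ v * v ^ (β - 1) - v * u ^ (β - 1) := by
      have h := mul_le_mul_of_nonneg_left key hv.le
      have e : v * ((β - 1) * v ^ (β - 2) * (v - u)) = (β - 1) * (v * v ^ (β - 2)) * (v - u) := by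
        ring
      rw [e, ← hv2] at h
      linarith
    rw [hvs, hus]
    nlinarith [key2]
  · rw [min_eq_right (by linarith)]
    have h1 : u ^ (β - 2) ≤ v ^ (β - 2) := Real.rpow_le_rpow hu.le huv (by linarith)
    have key : v * u ^ (β - 1) ≤ u * v ^ (β - 1) := by
      rw [hu2, hv2]
      nlinarith [mul_le_mul_of_nonneg_left h1 (mul_pos hu hv).le]
    rw [hvs, hus]
    nlinarith [key]

set_option maxHeartbeats 1000000

/-- Lemma 3.6(b): if b has polynomial growth |b(x) − b(0)| ≤ L_G·max(x^β, x), is one-sided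
locally Lipschitz with constant L_bloc, and is differentiable on [ζ, ∞) with
b'(x) ≤ B₁' − β·L_G·x^{β−1}, then for all distinct x, y > 0,
(y/(x−y))·((b(x)−b(0))/x − (b(y)−b(0))/y) ≤ L⁰ − L_G·min(β−1,1)·y·max(x,y)^{β−2}, where
L⁰ = max( max(B₁', L_bloc(ζ^{β−1}+1)) + L_G(βζ^{β−1}+1),
          (L_bloc + L_G)(max(ζ^{β−1},1)+1) ). -/
theorem drift_quotient_estimate
    (β L_G L_bloc B₁' ζ : ℝ)
    (hβ : 1 < β) (hLG : 0 ≤ L_G) (hLb : 0 < L_bloc) (hB₁' : 0 ≤ B₁') (hζ : 0 < ζ)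
    (b : ℝ → ℝ)
    (hgrowth : ∀ x : ℝ, 0 ≤ x → |b x - b 0| ≤ L_G * max (x ^ β) x)
    (hlip : ∀ x y : ℝ, 0 < x → 0 < y → x ≠ y →
      (b x - b y) / (x - y) ≤ L_bloc * (1 + (max x y) ^ (β - 1)))
    (hderiv : ∀ x : ℝ, ζ ≤ x →
      DifferentiableAt ℝ b x ∧ deriv b x ≤ B₁' - β * L_G * x ^ (β - 1)) :
    ∀ x y : ℝ, 0 < x → 0 < y → x ≠ y →
      y / (x - y) * ((b x - b 0) / x - (b y - b 0) / y)
        ≤ max (max B₁' (L_bloc * (ζ ^ (β - 1) + 1)) + L_G * (β * ζ ^ (β - 1) + 1))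
              ((L_bloc + L_G) * (max (ζ ^ (β - 1)) 1 + 1))
          - L_G * min (β - 1) 1 * y * (max x y) ^ (β - 2) := by
  intro x y hx hy hne
  have hx' : x ≠ 0 := hx.ne'
  have hy' : y ≠ 0 := hy.ne'
  have hd' : x - y ≠ 0 := sub_ne_zero.mpr hne
  have hZ0 : (0:ℝ) ≤ ζ ^ (β - 1) := (Real.rpow_pos_of_pos hζ _).le
  set Z := ζ ^ (β - 1) with hZ
  set μ := min (β - 1) 1 with hμ
  have hμ0 : 0 < μ := lt_min (by linarith) one_pos
  have hμ1 : μ ≤ 1 := min_le_right _ _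
  have hμβ : μ ≤ β - 1 := min_le_left _ _
  set C := max B₁' (L_bloc * (Z + 1)) with hC
  have hC0 : 0 ≤ C := le_trans hB₁' (le_max_left _ _)
  have hCB : B₁' ≤ C := le_max_left _ _
  have hCL : L_bloc * (Z + 1) ≤ C := le_max_right _ _
  set A := C + L_G * (β * Z + 1) with hA
  have hβZ : (0:ℝ) ≤ β * Z := mul_nonneg (by linarith) hZ0
  have hζs : ζ ^ β = ζ * Z := by rw [hZ]; exact rpow_split ζ β hζ
  suffices key : y / (x - y) * ((b x - b 0) / x - (b y - b 0) / y)
      + L_G * μ * y * (max x y) ^ (β - 2) ≤ A by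
    have h2 : A ≤ max A ((L_bloc + L_G) * (max Z 1 + 1)) := le_max_left _ _
    linarith
  have hX0 : (0:ℝ) < x ^ (β - 1) := Real.rpow_pos_of_pos hx _
  have hY0 : (0:ℝ) < y ^ (β - 1) := Real.rpow_pos_of_pos hy _
  have hxs : x ^ β = x * x ^ (β - 1) := rpow_split x β hx
  have hys : y ^ β = y * y ^ (β - 1) := rpow_split y β hy
  rcases hne.lt_or_gt with hxy | hxy
  · -- Case B : x < y
    have hmax : max x y = y := max_eq_right hxy.le
    rw [hmax]
    have hyx0 : 0 < y - x := sub_pos.mpr hxy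
    have hid : y / (x - y) * ((b x - b 0) / x - (b y - b 0) / y)
        = (b x - b y) / (x - y) - (b x - b 0) / x := by
      field_simp
      ring
    rw [hid]
    set D := (b x - b y) / (x - y) with hD
    have hDalt : D = (b y - b x) / (y - x) := by
      rw [hD, show x - y = -(y - x) by ring, show b x - b y = -(b y - b x) by ring,
        neg_div_neg_eq]
    -- K term
    have hy2 : y ^ (β - 1) = y * y ^ (β - 2) := by
      have := rpow_split y (β - 1) hy
      rwa [show β - 1 - 1 = β - 2 by ring] at this
    have hK : L_G * μ * y * y ^ (β - 2) = L_G * μ * y ^ (β - 1) := by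
      rw [hy2]; ring
    rw [hK]
    -- growth term
    have hgx2 : -(b x - b 0) ≤ L_G * (x * (x ^ (β - 1) + 1)) := by
      have h1 : max (x ^ β) x ≤ x * (x ^ (β - 1) + 1) := by
        apply max_le
        · rw [hxs]; linarith only [hx]
        · linarith only [mul_pos hx hX0]
      have h2 := (abs_le.mp (hgrowth x hx.le)).1
      linarith only [h2, mul_le_mul_of_nonneg_left h1 hLG]
    have hgterm : -((b x - b 0) / x) ≤ L_G * (x ^ (β - 1) + 1) := by
      rw [← neg_div]
      have h3 : L_G * (x * (x ^ (β - 1) + 1)) / x = L_G * (x ^ (β - 1) + 1) := by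
        field_simp
      rw [← h3]
      exact (div_le_div_iff_of_pos_right hx).mpr hgx2
    rcases le_or_gt ζ x with hζx | hxζ
    · -- B1 : ζ ≤ x < y
      have hstar := aux_star hβ hLG hζ b hderiv hζx hxy.le
      have hc1 := aux_C1 hβ hx hxy.le
      rw [← hμ] at hc1
      have hDb : D ≤ B₁' - L_G * (μ * y ^ (β - 1) + x ^ (β - 1)) := by
        rw [hDalt, div_le_iff₀ hyx0]
        linarith only [hstar, mul_le_mul_of_nonneg_left hc1 hLG]
      have e3 : L_G * 1 ≤ L_G * (β * Z + 1) :=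
        mul_le_mul_of_nonneg_left (by linarith) hLG
      linarith only [hDb, hgterm, e3, hCB, hA]
    · rcases le_or_gt y ζ with hyζ | hζy
      · -- B2a : x < y ≤ ζ
        have hXZ : x ^ (β - 1) ≤ Z := by
          rw [hZ]; exact Real.rpow_le_rpow hx.le (le_of_lt (hxy.trans_le hyζ)) (by linarith)
        have hYZ : y ^ (β - 1) ≤ Z := by
          rw [hZ]; exact Real.rpow_le_rpow hy.le hyζ (by linarith)
        have hDb : D ≤ L_bloc * (1 + y ^ (β - 1)) := by
          have h := hlip x y hx hy hne
          rw [hmax] at h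
          rw [hD]; exact h
        have e1 : L_bloc * (1 + y ^ (β - 1)) ≤ L_bloc * (Z + 1) :=
          mul_le_mul_of_nonneg_left (by linarith only [hYZ]) hLb.le
        have e2 : L_G * (x ^ (β - 1) + 1) ≤ L_G * (Z + 1) :=
          mul_le_mul_of_nonneg_left (by linarith only [hXZ]) hLG
        have e3 : L_G * (μ * y ^ (β - 1)) ≤ L_G * ((β - 1) * Z) :=
          mul_le_mul_of_nonneg_left
            (mul_le_mul hμβ hYZ hY0.le (by linarith)) hLG
        linarith only [hDb, e1, hgterm, e2, e3, hCL, hA]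
      · -- B2b : x < ζ < y
        have hXZ : x ^ (β - 1) ≤ Z := by
          rw [hZ]; exact Real.rpow_le_rpow hx.le hxζ.le (by linarith)
        have hZY : Z ≤ y ^ (β - 1) := by
          rw [hZ]; exact Real.rpow_le_rpow hζ.le hζy.le (by linarith)
        have hstar := aux_star hβ hLG hζ b hderiv (le_refl ζ) hζy.le
        have hlipx := hlip ζ x hζ hx (ne_of_gt hxζ)
        rw [max_eq_left hxζ.le] at hlipx
        have hζx0 : 0 < ζ - x := sub_pos.mpr hxζ
        have h5 : b ζ - b x ≤ L_bloc * (1 + Z) * (ζ - x) := by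
          have := (div_le_iff₀ hζx0).mp hlipx
          linarith only [this]
        have f3 : (y - x) * (y ^ (β - 1) - Z) ≤ y ^ β - ζ ^ β := by
          have g1 : (y - x) * (y ^ (β - 1) - Z) ≤ y * (y ^ (β - 1) - Z) :=
            mul_le_mul_of_nonneg_right (by linarith) (by linarith)
          have g4 : ζ * Z ≤ y * Z := mul_le_mul_of_nonneg_right hζy.le hZ0
          rw [hζs]
          linarith only [g1, g4, hys]
        have hDb : D ≤ C - L_G * (y ^ (β - 1) - Z) := by
          rw [hDalt, div_le_iff₀ hyx0]
          have f1 : B₁' * (y - ζ) ≤ C * (y - ζ) :=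
            mul_le_mul_of_nonneg_right hCB (by linarith)
          have f2 : L_bloc * (1 + Z) * (ζ - x) ≤ C * (ζ - x) :=
            mul_le_mul_of_nonneg_right (by linarith only [hCL]) (by linarith)
          have f4 : L_G * ((y - x) * (y ^ (β - 1) - Z)) ≤ L_G * (y ^ β - ζ ^ β) :=
            mul_le_mul_of_nonneg_left f3 hLG
          linarith only [hstar, h5, f1, f2, f4]
        have q1 : (μ - 1) * y ^ (β - 1) ≤ (μ - 1) * Z :=
          mul_le_mul_of_nonpos_left hZY (by linarith)
        have q2 : μ * Z ≤ (β - 1) * Z := mul_le_mul_of_nonneg_right hμβ hZ0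
        have q3 : L_G * (Z + x ^ (β - 1) + 1 + (μ - 1) * y ^ (β - 1)) ≤ L_G * (β * Z + 1) := by
          apply mul_le_mul_of_nonneg_left _ hLG
          linarith only [q1, q2, hXZ]
        linarith only [hDb, hgterm, q3, hA]
  · -- Case A : y < x
    have hmax : max x y = x := max_eq_left hxy.le
    rw [hmax]
    have hxy0 : 0 < x - y := sub_pos.mpr hxy
    have hid : y / (x - y) * ((b x - b 0) / x - (b y - b 0) / y)
        = y / x * ((b x - b y) / (x - y)) - (b y - b 0) / x := by
      field_simp
      ring
    rw [hid]
    set D := (b x - b y) / (x - y) with hD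
    set t := y / x with ht
    have ht0 : 0 < t := div_pos hy hx
    have ht1 : t ≤ 1 := by rw [ht]; exact (div_le_one hx).mpr hxy.le
    -- K term
    have hx2 : x ^ (β - 1) = x * x ^ (β - 2) := by
      have := rpow_split x (β - 1) hx
      rwa [show β - 1 - 1 = β - 2 by ring] at this
    have hK : L_G * μ * y * x ^ (β - 2) = L_G * μ * (t * x ^ (β - 1)) := by
      rw [hx2, ht]
      field_simp
    rw [hK]
    -- growth term
    have hgy2 : -(b y - b 0) ≤ L_G * (y * (y ^ (β - 1) + 1)) := by
      have h1 : max (y ^ β) y ≤ y * (y ^ (β - 1) + 1) := by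
        apply max_le
        · rw [hys]; linarith only [hy]
        · linarith only [mul_pos hy hY0]
      have h2 := (abs_le.mp (hgrowth y hy.le)).1
      linarith only [h2, mul_le_mul_of_nonneg_left h1 hLG]
    have hgterm : -((b y - b 0) / x) ≤ L_G * t * (y ^ (β - 1) + 1) := by
      rw [← neg_div]
      have h3 : L_G * (y * (y ^ (β - 1) + 1)) / x = L_G * t * (y ^ (β - 1) + 1) := by
        rw [ht]; field_simp
      rw [← h3]
      exact (div_le_div_iff_of_pos_right hx).mpr hgy2
    rcases le_or_gt ζ y with hζy | hyζ
    · -- A1 : ζ ≤ y < x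
      have hstar := aux_star hβ hLG hζ b hderiv hζy hxy.le
      have hc1 := aux_C1 hβ hy hxy.le
      rw [← hμ] at hc1
      have hDb : D ≤ B₁' - L_G * (μ * x ^ (β - 1) + y ^ (β - 1)) := by
        rw [hD, div_le_iff₀ hxy0]
        linarith only [hstar, mul_le_mul_of_nonneg_left hc1 hLG]
      have htD : t * D ≤ t * (B₁' - L_G * (μ * x ^ (β - 1) + y ^ (β - 1))) :=
        mul_le_mul_of_nonneg_left hDb ht0.le
      have e1 : t * B₁' ≤ B₁' := mul_le_of_le_one_left hB₁' ht1
      have e2 : L_G * t ≤ L_G * (β * Z + 1) :=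
        mul_le_mul_of_nonneg_left (by linarith only [ht1, hβZ]) hLG
      have hR : t * (B₁' - L_G * (μ * x ^ (β - 1) + y ^ (β - 1)))
          + L_G * t * (y ^ (β - 1) + 1) + L_G * μ * (t * x ^ (β - 1))
          = t * B₁' + L_G * t := by ring
      linarith only [htD, hgterm, e1, e2, hCB, hR, hA]
    · rcases le_or_gt x ζ with hxζ | hζx
      · -- A2a : y < x ≤ ζ
        have hXZ : x ^ (β - 1) ≤ Z := by
          rw [hZ]; exact Real.rpow_le_rpow hx.le hxζ (by linarith)
        have hYZ : y ^ (β - 1) ≤ Z := by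
          rw [hZ]; exact Real.rpow_le_rpow hy.le (hxy.le.trans hxζ) (by linarith)
        have hDb : D ≤ L_bloc * (1 + x ^ (β - 1)) := by
          have h := hlip x y hx hy hne
          rw [hmax] at h
          rw [hD]; exact h
        have htD : t * D ≤ t * (L_bloc * (1 + x ^ (β - 1))) :=
          mul_le_mul_of_nonneg_left hDb ht0.le
        have e1 : t * (L_bloc * (1 + x ^ (β - 1))) ≤ L_bloc * (Z + 1) := by
          have h1 : t * (L_bloc * (1 + x ^ (β - 1))) ≤ L_bloc * (1 + x ^ (β - 1)) :=
            mul_le_of_le_one_left (by positivity) ht1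
          have h2 : L_bloc * (1 + x ^ (β - 1)) ≤ L_bloc * (Z + 1) :=
            mul_le_mul_of_nonneg_left (by linarith only [hXZ]) hLb.le
          linarith only [h1, h2]
        have e2 : L_G * t * (y ^ (β - 1) + 1) ≤ L_G * (Z + 1) := by
          have h1 : t * (y ^ (β - 1) + 1) ≤ Z + 1 :=
            le_trans (mul_le_of_le_one_left (by positivity) ht1) (by linarith only [hYZ])
          have h2 := mul_le_mul_of_nonneg_left h1 hLG
          linarith only [h2]
        have e3 : L_G * μ * (t * x ^ (β - 1)) ≤ L_G * ((β - 1) * Z) := by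
          have h1 : t * x ^ (β - 1) ≤ Z :=
            le_trans (mul_le_of_le_one_left hX0.le ht1) hXZ
          have h2 : μ * (t * x ^ (β - 1)) ≤ (β - 1) * Z :=
            mul_le_mul hμβ h1 (mul_nonneg ht0.le hX0.le) (by linarith)
          have h3 := mul_le_mul_of_nonneg_left h2 hLG
          linarith only [h3]
        linarith only [htD, e1, hgterm, e2, e3, hCL, hA]
      · -- A2b : y < ζ < x
        have hYZ : y ^ (β - 1) ≤ Z := by
          rw [hZ]; exact Real.rpow_le_rpow hy.le hyζ.le (by linarith)
        have hZX : Z ≤ x ^ (β - 1) := by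
          rw [hZ]; exact Real.rpow_le_rpow hζ.le hζx.le (by linarith)
        have hstar := aux_star hβ hLG hζ b hderiv (le_refl ζ) hζx.le
        have hlipy := hlip ζ y hζ hy (ne_of_gt hyζ)
        rw [max_eq_left hyζ.le] at hlipy
        have hζy0 : 0 < ζ - y := sub_pos.mpr hyζ
        have h5 : b ζ - b y ≤ L_bloc * (1 + Z) * (ζ - y) := by
          have := (div_le_iff₀ hζy0).mp hlipy
          linarith only [this]
        have f3 : (x - y) * (x ^ (β - 1) - Z) ≤ x ^ β - ζ ^ β := by
          have g1 : (x - y) * (x ^ (β - 1) - Z) ≤ x * (x ^ (β - 1) - Z) :=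
            mul_le_mul_of_nonneg_right (by linarith) (by linarith)
          have g4 : ζ * Z ≤ x * Z := mul_le_mul_of_nonneg_right hζx.le hZ0
          rw [hζs]
          linarith only [g1, g4, hxs]
        have hDb : D ≤ C - L_G * (x ^ (β - 1) - Z) := by
          rw [hD, div_le_iff₀ hxy0]
          have f1 : B₁' * (x - ζ) ≤ C * (x - ζ) :=
            mul_le_mul_of_nonneg_right hCB (by linarith)
          have f2 : L_bloc * (1 + Z) * (ζ - y) ≤ C * (ζ - y) :=
            mul_le_mul_of_nonneg_right (by linarith only [hCL]) (by linarith)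
          have f4 : L_G * ((x - y) * (x ^ (β - 1) - Z)) ≤ L_G * (x ^ β - ζ ^ β) :=
            mul_le_mul_of_nonneg_left f3 hLG
          linarith only [hstar, h5, f1, f2, f4]
        have htD : t * D ≤ t * (C - L_G * (x ^ (β - 1) - Z)) :=
          mul_le_mul_of_nonneg_left hDb ht0.le
        have e0 : t * C ≤ C := mul_le_of_le_one_left hC0 ht1
        have q1 : (μ - 1) * (t * x ^ (β - 1)) ≤ (μ - 1) * (t * Z) := by
          apply mul_le_mul_of_nonpos_left _ (by linarith : μ - 1 ≤ 0)
          exact mul_le_mul_of_nonneg_left hZX ht0.le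
        have q2 : μ * Z ≤ (β - 1) * Z := mul_le_mul_of_nonneg_right hμβ hZ0
        have q3 : t * (μ * Z + y ^ (β - 1) + 1) ≤ μ * Z + y ^ (β - 1) + 1 :=
          mul_le_of_le_one_left (by positivity) ht1
        have q4 : μ * Z + y ^ (β - 1) + 1 ≤ β * Z + 1 := by linarith only [q2, hYZ]
        have q5 : L_G * (t * (Z + y ^ (β - 1) + 1) + (μ - 1) * (t * x ^ (β - 1)))
            ≤ L_G * (β * Z + 1) := by
          apply mul_le_mul_of_nonneg_left _ hLG
          linarith only [q1, q3, q4]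
        linarith only [htD, hgterm, q5, e0, hA]
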